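/- Let p be a prime, K a field of characteristic p, D a derivation on K, and g ∈ K with g ≠ 0. Then the logarithmic derivative h = D(g)/g satisfies D^{p-1}(h) + h^p = D^p(g)/g. In particular, if D^p = 0, every logarithmic derivative D(g)/g is a solution of the homogeneous p-Riccati equation D^{p-1}(f) + f^p = 0. -/

import Mathlib

open Polynomial Finset

private lemma choose_sub_one_cast (p : ℕ) (hp : p.Prime) :
    ∀ i, i ≤ p - 1 → (((p - 1).choose i : ZMod p)) = (-1) ^ i := by
  intro i
  induction i with
  | zero => simp
  | succ n ih =>
    intro hi
    have hn : n ≤ p - 1 := le_of_lt (Nat.lt_of_lt_of_le (Nat.lt_succ_self n) hi)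
    have hps : p - 1 + 1 = p := Nat.succ_pred_eq_of_pos hp.pos
    have hlt : n + 1 < p := by omega
    have hchoose : (p - 1).choose n + (p - 1).choose (n + 1) = p.choose (n + 1) := by
      conv_rhs => rw [← hps]
      rw [Nat.choose_succ_succ]
    have hdvd : p ∣ p.choose (n + 1) := hp.dvd_choose_self (Nat.succ_ne_zero n) hlt
    have hcast : ((p.choose (n + 1) : ℕ) : ZMod p) = 0 :=
      (CharP.cast_eq_zero_iff (ZMod p) p _).2 hdvd
    have := congrArg (fun k : ℕ => (k : ZMod p)) hchoose
    simp only [Nat.cast_add, hcast] at this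
    rw [ih hn] at this
    have : ((p - 1).choose (n + 1) : ZMod p) = -(-1) ^ n := by linear_combination this
    rw [this, pow_succ]
    ring

private lemma coeff_one_zmod (p : ℕ) (hp : p.Prime) {m : ℕ} (hm : m ≤ p - 1) :
    ((-1 : ZMod p) ^ (p - 1 - m) * ((p - 1).choose m : ZMod p)) = 1 := by
  rw [choose_sub_one_cast p hp m hm, ← pow_add, Nat.sub_add_cancel hm]
  rcases hp.eq_two_or_odd' with h2 | hodd
  · subst h2; decide
  · have : Even (p - 1) := Nat.Odd.sub_odd hodd odd_one
    exact this.neg_one_pow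

private lemma end_sum_apply {M : Type*} [AddCommMonoid M] {ι : Type*} (s : Finset ι)
    (f : ι → AddMonoid.End M) (y : M) : (∑ i ∈ s, f i) y = ∑ i ∈ s, f i y := by
  classical
  induction s using Finset.induction with
  | empty => simp [AddMonoid.End.zero_apply]
  | insert _ _ h ih => rw [Finset.sum_insert h, Finset.sum_insert h, ← ih]; rfl

private lemma sum_conj_eq_ad_pow {T : Type*} [Ring T] (p : ℕ) (hp : p.Prime) [CharP T p]
    (x a : T) :
    ∑ i ∈ Finset.range p, x ^ i * a * x ^ (p - 1 - i)
      = (fun y => x * y - y * x)^[p - 1] a := by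
  have hps : p - 1 + 1 = p := Nat.succ_pred_eq_of_pos hp.pos
  set ℓ : AddMonoid.End T := AddMonoidHom.mulLeft x with hℓdef
  set r : AddMonoid.End T := AddMonoidHom.mulRight x with hrdef
  have hc0 : Commute ℓ r := by
    refine AddMonoidHom.ext fun y => ?_
    show x * (y * x) = (x * y) * x
    rw [mul_assoc]
  have hcomm : Commute ℓ (-r) := hc0.neg_right
  have hℓpow : ∀ (n : ℕ) (y : T), (ℓ ^ n) y = x ^ n * y := by
    intro n
    induction n with
    | zero => intro y; simp
    | succ n ih =>
      intro y
      rw [pow_succ']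
      show ℓ ((ℓ ^ n) y) = x ^ (n + 1) * y
      rw [ih]
      show x * (x ^ n * y) = x ^ (n + 1) * y
      rw [← mul_assoc, ← pow_succ']
  have hrpow : ∀ (n : ℕ) (y : T), ((-r) ^ n) y = (-1 : T) ^ n * (y * x ^ n) := by
    intro n
    induction n with
    | zero => intro y; simp
    | succ n ih =>
      intro y
      rw [pow_succ]
      show ((-r) ^ n) ((-r) y) = _
      have h1 : (-r) y = -(y * x) := rfl
      rw [h1, map_neg, ih, mul_assoc y x (x ^ n)]
      have h2 : x * x ^ n = x ^ (n + 1) := (pow_succ' x n).symm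
      rw [h2, pow_succ (-1 : T) n, mul_neg_one, neg_mul]
  have hiter : ∀ (n : ℕ) (y : T), ((ℓ + -r) ^ n) y = (fun y => x * y - y * x)^[n] y := by
    intro n
    induction n with
    | zero => intro y; simp
    | succ n ih =>
      intro y
      rw [pow_succ', Function.iterate_succ_apply']
      show (ℓ + -r) (((ℓ + -r) ^ n) y) = _
      rw [ih]
      show ℓ _ + (-r) _ = _
      have h1 : ∀ z : T, (-r) z = -(z * x) := fun z => rfl
      rw [h1, ← sub_eq_add_neg]
      rfl
  have key := hcomm.add_pow (p - 1)
  have happ := congrArg (fun f : AddMonoid.End T => f a) key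
  rw [hps, end_sum_apply] at happ
  rw [← hiter, happ]
  symm
  apply Finset.sum_congr rfl
  intro m hm
  have hmle : m ≤ p - 1 := by
    have := Finset.mem_range.mp hm; omega
  show (ℓ ^ m * (-r) ^ (p - 1 - m) * (((p - 1).choose m : ℕ) : AddMonoid.End T)) a
      = x ^ m * a * x ^ (p - 1 - m)
  have h1 : (((p - 1).choose m : ℕ) : AddMonoid.End T) a = ((p - 1).choose m : ℕ) • a :=
    AddMonoid.End.natCast_apply _ _
  show (ℓ ^ m) (((-r) ^ (p - 1 - m)) ((((p - 1).choose m : ℕ) : AddMonoid.End T) a))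
      = x ^ m * a * x ^ (p - 1 - m)
  rw [h1, nsmul_eq_mul, hrpow, hℓpow]
  have hone : ((-1 : T) ^ (p - 1 - m) * (((p - 1).choose m : ℕ) : T)) = 1 := by
    have := congrArg (ZMod.castHom (dvd_refl p) T) (coeff_one_zmod p hp hmle)
    rw [map_mul, map_pow, map_neg, map_one, map_natCast] at this
    exact this
  rw [mul_assoc ((((p - 1).choose m : ℕ)) : T) a (x ^ (p - 1 - m)),
    ← mul_assoc ((-1 : T) ^ (p - 1 - m)) _ _, hone, one_mul, ← mul_assoc]

private lemma derivative_pow_eq_sum {R : Type*} [Semiring R] (P : R[X]) (n : ℕ) :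
    derivative (P ^ n) = ∑ i ∈ Finset.range n, P ^ i * derivative P * P ^ (n - 1 - i) := by
  induction n with
  | zero => simp
  | succ n ih =>
    rw [pow_succ', derivative_mul, ih, Finset.mul_sum, Finset.sum_range_succ']
    simp only [pow_zero, one_mul, Nat.add_sub_cancel, pow_succ']
    rw [add_comm]
    congr 1
    apply Finset.sum_congr rfl
    intro i hi
    rw [← mul_assoc, ← mul_assoc]
    congr 2
    omega

private lemma hochschild {S : Type*} [Ring S] (p : ℕ) (hp : p.Prime) [CharP S p]
    (a b : S) (ha : a ≠ 0) (m : ℕ → S) (hm0 : m 0 = a)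
    (hcomm : ∀ i, a * m i = m i * a)
    (hbr : ∀ i, b * m i - m i * b = m (i + 1)) :
    (a + b) ^ p = a ^ p + b ^ p + m (p - 1) := by
  have hps : p - 1 + 1 = p := Nat.succ_pred_eq_of_pos hp.pos
  have hp1 : p ≠ 1 := hp.one_lt.ne'
  set F : S[X] := C a * X + C b with hF
  have hdF : derivative F = C a := by
    simp [hF]
  have had : ∀ i, (fun y => F * y - y * F)^[i] (C a) = C (m i) := by
    intro i
    induction i with
    | zero => simp [hm0]
    | succ n ih =>
      rw [Function.iterate_succ_apply', ih]
      show F * C (m n) - C (m n) * F = C (m (n + 1))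
      rw [hF, add_mul, mul_add]
      have hX : C a * X * C (m n) = C (m n) * (C a * X) := by
        rw [mul_assoc, X_mul_C, ← mul_assoc, ← C_mul, hcomm, C_mul, mul_assoc]
      rw [hX, ← C_mul, ← C_mul, add_sub_add_left_eq_sub, ← C_sub, hbr]
  have hdpow : derivative (F ^ p) = C (m (p - 1)) := by
    rw [derivative_pow_eq_sum, hdF, sum_conj_eq_ad_pow p hp F (C a), had]
  set Q : S[X] := C (a ^ p) * X ^ p + C (m (p - 1)) * X + C (b ^ p) with hQ
  have hdQ : derivative Q = C (m (p - 1)) := by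
    rw [hQ, C_mul_X_pow_eq_monomial, derivative_add, derivative_add, derivative_monomial,
      derivative_C_mul_X, derivative_C]
    have h0 : (a ^ p * (p : S)) = 0 := by
      rw [CharP.cast_eq_zero S p, mul_zero]
    rw [h0]
    simp
  have hdeg : (F ^ p).natDegree ≤ p := by
    calc (F ^ p).natDegree ≤ p * F.natDegree := natDegree_pow_le
    _ ≤ p * 1 := Nat.mul_le_mul_left p natDegree_linear_le
    _ = p := mul_one p
  have hcoeff0 : (F ^ p).coeff 0 = b ^ p := by
    have h1 : constantCoeff (F ^ p) = (constantCoeff F) ^ p := map_pow _ _ _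
    have h2 : constantCoeff F = b := by
      simp [hF, constantCoeff_apply, coeff_add, mul_coeff_zero]
    simpa [constantCoeff_apply, h2] using h1
  have hcoeffp : (F ^ p).coeff p = a ^ p := by
    have h1 := coeff_pow_mul_natDegree F p
    rw [natDegree_linear ha, leadingCoeff_linear ha, mul_one] at h1
    exact h1
  have hQ0 : Q.coeff 0 = b ^ p := by
    rw [hQ, coeff_add, coeff_add, coeff_C_mul, coeff_C_mul, coeff_X_pow, coeff_X_zero,
      coeff_C, if_neg (Ne.symm hp.ne_zero), if_pos rfl]
    simp
  have hQp : Q.coeff p = a ^ p := by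
    rw [hQ, coeff_add, coeff_add, coeff_C_mul, coeff_C_mul, coeff_X_pow, coeff_X,
      coeff_C, if_pos rfl, if_neg (Ne.symm hp1), if_neg hp.ne_zero]
    simp
  have hQhigh : ∀ n, p < n → Q.coeff n = 0 := by
    intro n hn
    have h1 : n ≠ p := hn.ne'
    have h2 : (1:ℕ) ≠ n := by omega
    have h3 : n ≠ 0 := by omega
    rw [hQ, coeff_add, coeff_add, coeff_C_mul, coeff_C_mul, coeff_X_pow, coeff_X,
      coeff_C, if_neg h1, if_neg h2, if_neg h3]
    simp
  have hFQ : F ^ p = Q := by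
    have hder0 : derivative (F ^ p - Q) = 0 := by
      rw [derivative_sub, hdpow, hdQ, sub_self]
    ext n
    rcases Nat.lt_trichotomy n p with hlt | heq | hgt
    · rcases Nat.eq_zero_or_pos n with h0 | hpos
      · subst h0
        rw [hcoeff0, hQ0]
      · -- 0 < n < p : use the vanishing derivative
        have hkey : (F ^ p - Q).coeff n * ((n : ℕ) : S) = 0 := by
          have h4 := congrArg (fun q => coeff q (n - 1)) hder0
          simp only [coeff_zero] at h4
          rw [coeff_derivative, Nat.sub_add_cancel hpos,
            show ((n - 1 : ℕ) : S) + 1 = ((n : ℕ) : S) by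
              exact_mod_cast congrArg (Nat.cast : ℕ → S) (Nat.sub_add_cancel hpos)] at h4
          exact h4
        have hnd : ¬ (p ∣ n) := Nat.not_dvd_of_pos_of_lt hpos hlt
        haveI := Fact.mk hp
        have hu : ((n : ℕ) : ZMod p) ≠ 0 := by
          rw [Ne, ZMod.natCast_eq_zero_iff]
          exact hnd
        have hinv : ((n : ℕ) : S) * (ZMod.castHom (dvd_refl p) S) (((n : ℕ) : ZMod p))⁻¹ = 1 := by
          rw [show ((n : ℕ) : S) = (ZMod.castHom (dvd_refl p) S) ((n : ℕ) : ZMod p) by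
            rw [map_natCast], ← map_mul, mul_inv_cancel₀ hu, map_one]
        have hz : (F ^ p - Q).coeff n = 0 := by
          have h2 := congrArg
            (fun z => z * (ZMod.castHom (dvd_refl p) S) (((n : ℕ) : ZMod p))⁻¹) hkey
          simp only [zero_mul] at h2
          rw [mul_assoc, hinv, mul_one] at h2
          exact h2
        rw [coeff_sub] at hz
        exact sub_eq_zero.mp hz
    · subst heq
      rw [hcoeffp, hQp]
    · rw [hQhigh n hgt]
      exact coeff_eq_zero_of_natDegree_lt (lt_of_le_of_lt hdeg hgt)
  -- evaluate at X = 1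
  set ψ : S[X] →+* S := eval₂RingHom' (RingHom.id S) (1 : S) (fun s => Commute.one_right s)
    with hψdef
  have hψC : ∀ c : S, ψ (C c) = c := fun c => eval₂_C _ _
  have hψX : ψ X = 1 := eval₂_X _ _
  have h5 := congrArg ψ hFQ
  rw [hQ, hF] at h5
  simp only [map_pow, map_add, map_mul, hψC, hψX] at h5
  rw [one_pow, mul_one, mul_one] at h5
  rw [h5, add_right_comm, mul_one]

private lemma end_add_apply {M : Type*} [AddCommMonoid M] (f g : AddMonoid.End M) (x : M) :
    (f + g) x = f x + g x := rfl

private lemma end_pow_apply {M : Type*} [AddCommMonoid M] (f : AddMonoid.End M) (n : ℕ)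
    (x : M) : (f ^ n) x = (⇑f)^[n] x := by
  induction n with
  | zero => rfl
  | succ n ih =>
    rw [pow_succ', Function.iterate_succ_apply']
    show f ((f ^ n) x) = f ((⇑f)^[n] x)
    rw [ih]

/-- Let `p` be a prime, `K` a field of characteristic `p`, `D` a derivation on `K`
(an additive map satisfying the Leibniz rule), and `g ∈ K` nonzero. Then the logarithmic
derivative `h = D(g)/g` satisfies `D^{p-1}(h) + h^p = D^p(g)/g`. In particular, if
`D^p = 0`, every logarithmic derivative is a solution of the homogeneous `p`-Riccati
equation `D^{p-1}(f) + f^p = 0`. -/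
theorem logDeriv_pRiccati
    (p : ℕ) (hp : p.Prime) (K : Type*) [Field K] [CharP K p]
    (D : K → K)
    (hadd : ∀ u v : K, D (u + v) = D u + D v)
    (hleib : ∀ u v : K, D (u * v) = u * D v + v * D u)
    (g : K) (hg : g ≠ 0) :
    D^[p - 1] (D g / g) + (D g / g) ^ p = D^[p] g / g ∧
      ((∀ a : K, D^[p] a = 0) → D^[p - 1] (D g / g) + (D g / g) ^ p = 0) := by
  have hps : p - 1 + 1 = p := Nat.succ_pred_eq_of_pos hp.pos
  have hD0 : D 0 = 0 := by
    have := hadd 0 0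
    simp only [add_zero] at this
    exact (left_eq_add.mp this)
  have hiter0 : ∀ n : ℕ, D^[n] (0 : K) = 0 := fun n => Function.iterate_fixed hD0 n
  have hD1 : D 1 = 0 := by
    have := hleib 1 1
    simp only [mul_one, one_mul] at this
    exact (left_eq_add.mp this)
  -- the main identity
  suffices hmain : D^[p - 1] (D g / g) + (D g / g) ^ p = D^[p] g / g by
    refine ⟨hmain, fun hall => ?_⟩
    rw [hmain, hall g, zero_div]
  by_cases hzero : D g = 0
  · have h0 : D g / g = 0 := by rw [hzero, zero_div]
    have hDpg : D^[p] g = 0 := by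
      rw [← hps, Function.iterate_succ_apply, hzero, hiter0]
    rw [h0, hDpg, hiter0, zero_div, zero_pow hp.ne_zero, add_zero]
  · set h : K := D g / g with hh
    have hhne : h ≠ 0 := div_ne_zero hzero hg
    haveI : CharP (AddMonoid.End K) p := by
      constructor
      intro n
      rw [← CharP.cast_eq_zero_iff K p n]
      constructor
      · intro hn
        have := congrArg (fun f : AddMonoid.End K => f 1) hn
        simpa [AddMonoid.End.natCast_apply, nsmul_eq_mul] using this
      · intro hn
        refine AddMonoidHom.ext fun x => ?_
        show (n : AddMonoid.End K) x = 0
        rw [AddMonoid.End.natCast_apply, nsmul_eq_mul, hn, zero_mul]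
    set D' : AddMonoid.End K := AddMonoidHom.mk' D hadd with hD'
    set a : AddMonoid.End K := AddMonoidHom.mulLeft h with hadef
    set m : ℕ → AddMonoid.End K := fun i => AddMonoidHom.mulLeft (D^[i] h) with hmdef
    have ha : a ≠ 0 := by
      intro hcon
      have := congrArg (fun f : AddMonoid.End K => f 1) hcon
      simp only [hadef] at this
      replace this : h * 1 = 0 := this
      simp at this
      exact hhne this
    have hm0 : m 0 = a := by simp [hmdef, hadef]; exact rfl
    have hcommm : ∀ i, a * m i = m i * a := by
      intro i
      refine AddMonoidHom.ext fun x => ?_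
      show h * (D^[i] h * x) = D^[i] h * (h * x)
      rw [mul_left_comm]
    have hbrr : ∀ i, D' * m i - m i * D' = m (i + 1) := by
      intro i
      refine AddMonoidHom.ext fun x => ?_
      show D (D^[i] h * x) - D^[i] h * D x = D^[i+1] h * x
      rw [hleib, Function.iterate_succ_apply']
      ring
    have hoch := hochschild p hp a D' ha m hm0 hcommm hbrr
    have happly := congrArg (fun f : AddMonoid.End K => f 1) hoch
    rw [end_add_apply, end_add_apply] at happly
    -- identify the three terms on the RHS
    have hap : (a ^ p) 1 = h ^ p := by
      rw [end_pow_apply]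
      have hca : ⇑a = (h * ·) := rfl
      rw [hca, mul_left_iterate]
      simp
    have hbp : (D' ^ p) 1 = 0 := by
      rw [end_pow_apply]
      have hcoe : ⇑D' = D := rfl
      rw [hcoe, ← hps, Function.iterate_succ_apply, hD1, hiter0]
    have hmp : (m (p - 1)) 1 = D^[p - 1] h := by
      show D^[p - 1] h * 1 = D^[p - 1] h
      rw [mul_one]
    -- LHS : iterate of E
    have hE : ∀ (n : ℕ) (x : K), g * (⇑(a + D'))^[n] x = D^[n] (g * x) := by
      intro n
      induction n with
      | zero => intro x; simp
      | succ n ih =>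
        intro x
        rw [Function.iterate_succ_apply, Function.iterate_succ_apply, ih]
        congr 1
        show g * (h * x + D x) = D (g * x)
        rw [hleib]
        have : g * h = D g := by
          rw [hh, mul_div_cancel₀ _ hg]
        rw [mul_add, ← mul_assoc, this]
        ring
    have hlhs : g * ((a + D') ^ p) 1 = D^[p] g := by
      rw [end_pow_apply, hE, mul_one]
    -- put everything together
    have hfin : g * (h ^ p + D^[p - 1] h) = D^[p] g := by
      rw [← hap, ← hmp, ← hlhs, happly, hbp, add_zero]
    have : D^[p] g / g = h ^ p + D^[p - 1] h := by
      rw [← hfin, mul_div_cancel_left₀ _ hg]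
    rw [this, add_comm]
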